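/- Let X be a Polish space and k a bounded continuous characteristic kernel on X × X. If a sequence of Borel probability measures P_n converges weakly to P, then MMD_k(P_n, P) → 0. -/

import Mathlib

open MeasureTheory Filter

namespace MmdAux

variable {X : Type*}

/-- Union of a list of rectangles. -/
def rectU (L : List (Set X × Set X)) : Set (X × X) :=
  L.foldr (fun p s => p.1 ×ˢ p.2 ∪ s) ∅

lemma rectU_nil : rectU ([] : List (Set X × Set X)) = ∅ := rfl

lemma rectU_cons (p : Set X × Set X) (L : List (Set X × Set X)) :
    rectU (p :: L) = p.1 ×ˢ p.2 ∪ rectU L := rfl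

lemma mem_rectU {z : X × X} {L : List (Set X × Set X)} :
    z ∈ rectU L ↔ ∃ p ∈ L, z ∈ p.1 ×ˢ p.2 := by
  induction L with
  | nil => simp [rectU_nil]
  | cons p L ih => simp [rectU_cons, ih]

lemma measurableSet_rectU [MeasurableSpace X] {L : List (Set X × Set X)}
    (h : ∀ p ∈ L, MeasurableSet p.1 ∧ MeasurableSet p.2) : MeasurableSet (rectU L) := by
  induction L with
  | nil => simp [rectU_nil]
  | cons p L ih =>
    rw [rectU_cons]
    exact (((h p (by simp)).1).prod ((h p (by simp)).2)).union
      (ih fun q hq => h q (by simp [hq]))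

lemma inter_rectU (U V : Set X) (L : List (Set X × Set X)) :
    (U ×ˢ V) ∩ rectU L = rectU (L.map fun p => (U ∩ p.1, V ∩ p.2)) := by
  induction L with
  | nil => simp [rectU_nil]
  | cons p L ih =>
    simp only [rectU_cons, List.map_cons, Set.inter_union_distrib_left, ih,
      Set.prod_inter_prod]

/-- Convergence of product measures on finite unions of "good" rectangles. -/
lemma tendsto_rectU [MeasurableSpace X]
    (P : ℕ → Measure X) (P0 : Measure X) [∀ n, IsProbabilityMeasure (P n)]
    [IsProbabilityMeasure P0]
    (good : Set X → Prop)
    (good_meas : ∀ U, good U → MeasurableSet U)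
    (good_inter : ∀ U V, good U → good V → good (U ∩ V))
    (good_tendsto : ∀ U, good U →
      Tendsto (fun n => ((P n) U).toReal) atTop (nhds ((P0 U).toReal))) :
    ∀ (m : ℕ) (L : List (Set X × Set X)), L.length ≤ m →
      (∀ p ∈ L, good p.1 ∧ good p.2) →
      Tendsto (fun n => (((P n).prod (P n)) (rectU L)).toReal) atTop
        (nhds ((P0.prod P0 (rectU L)).toReal)) := by
  intro m
  induction m with
  | zero =>
    intro L hL _
    have : L = [] := List.length_eq_zero_iff.mp (Nat.le_zero.mp hL)
    subst this
    simp [rectU_nil]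
  | succ m ih =>
    intro L hlen hgood
    match L with
    | [] => simp [rectU_nil]
    | p :: L' =>
      have hgood' : ∀ q ∈ L', good q.1 ∧ good q.2 := fun q hq => hgood q (by simp [hq])
      have hgp := hgood p (by simp)
      have hlen' : L'.length ≤ m := by simpa using Nat.succ_le_succ_iff.mp hlen
      set A : Set (X × X) := p.1 ×ˢ p.2 with hA
      set B : Set (X × X) := rectU L' with hB
      have hmeasB : MeasurableSet B :=
        measurableSet_rectU fun q hq => ⟨good_meas _ (hgood' q hq).1, good_meas _ (hgood' q hq).2⟩
      have hAB : A ∩ B = rectU (L'.map fun q => (p.1 ∩ q.1, p.2 ∩ q.2)) := inter_rectU _ _ _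
      have hgood'' : ∀ q ∈ (L'.map fun q => (p.1 ∩ q.1, p.2 ∩ q.2)), good q.1 ∧ good q.2 := by
        intro q hq
        rcases List.mem_map.mp hq with ⟨r, hr, rfl⟩
        exact ⟨good_inter _ _ hgp.1 (hgood' r hr).1, good_inter _ _ hgp.2 (hgood' r hr).2⟩
      have hlen'' : (L'.map fun q => (p.1 ∩ q.1, p.2 ∩ q.2)).length ≤ m := by
        simpa using hlen'
      have tendB := ih L' hlen' hgood'
      have tendAB := ih _ hlen'' hgood''
      rw [← hAB] at tendAB
      have tendA : Tendsto (fun n => (((P n).prod (P n)) A).toReal) atTop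
          (nhds ((P0.prod P0 A).toReal)) := by
        simp only [hA, Measure.prod_prod, ENNReal.toReal_mul]
        exact (good_tendsto _ hgp.1).mul (good_tendsto _ hgp.2)
      have key : ∀ (Q : Measure (X × X)) [IsProbabilityMeasure Q],
          (Q (A ∪ B)).toReal = (Q A).toReal + (Q B).toReal - (Q (A ∩ B)).toReal := by
        intro Q hQ
        have h1 := measure_union_add_inter (μ := Q) A hmeasB
        have h2 : (Q (A ∪ B)).toReal + (Q (A ∩ B)).toReal
            = (Q A).toReal + (Q B).toReal := by
          rw [← ENNReal.toReal_add (measure_ne_top _ _) (measure_ne_top _ _),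
            ← ENNReal.toReal_add (measure_ne_top _ _) (measure_ne_top _ _), h1]
        linarith
      have hU : rectU (p :: L') = A ∪ B := rectU_cons p L'
      rw [hU]
      have := (tendA.add tendB).sub tendAB
      simp only [key] at *
      convert this using 1

/-- Every open set of `X × X`, `X` a separable metric space, can be covered by countably many
open rectangles whose sides have `P0`-null frontier. -/
lemma exists_rect_cover [MetricSpace X] [SecondCountableTopology X]
    [MeasurableSpace X] [BorelSpace X] (P0 : Measure X) [IsProbabilityMeasure P0]
    {G : Set (X × X)} (hG : IsOpen G) :
    ∃ U V : ℕ → Set X,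
      (∀ i, IsOpen (U i) ∧ IsOpen (V i) ∧ P0 (frontier (U i)) = 0 ∧ P0 (frontier (V i)) = 0) ∧
      (⋃ i, (U i) ×ˢ (V i)) ⊆ G ∧ G ⊆ ⋃ i, (U i) ×ˢ (V i) := by
  rcases Set.eq_empty_or_nonempty G with rfl | hGne
  · exact ⟨fun _ => ∅, fun _ => ∅, by simp, by simp, by simp⟩
  have key : ∀ z : G, ∃ u v : Set X, IsOpen u ∧ IsOpen v ∧
      P0 (frontier u) = 0 ∧ P0 (frontier v) = 0 ∧ (z : X × X) ∈ u ×ˢ v ∧ u ×ˢ v ⊆ G := by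
    rintro ⟨⟨x, y⟩, hz⟩
    rcases isOpen_prod_iff.mp hG x y hz with ⟨u, v, hu, hv, hxu, hyv, huv⟩
    rcases Metric.isOpen_iff.mp hu x hxu with ⟨ε₁, hε₁, hball₁⟩
    rcases Metric.isOpen_iff.mp hv y hyv with ⟨ε₂, hε₂, hball₂⟩
    set ε := min ε₁ ε₂ with hε
    have hεpos : 0 < ε := lt_min hε₁ hε₂
    rcases exists_null_frontier_thickening P0 {x} (half_lt_self hεpos) with ⟨r₁, hr₁, hn₁⟩
    rcases exists_null_frontier_thickening P0 {y} (half_lt_self hεpos) with ⟨r₂, hr₂, hn₂⟩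
    rw [Metric.thickening_singleton] at hn₁
    rw [Metric.thickening_singleton] at hn₂
    refine ⟨Metric.ball x r₁, Metric.ball y r₂, Metric.isOpen_ball, Metric.isOpen_ball,
      hn₁, hn₂, ⟨Metric.mem_ball_self (lt_trans (half_pos hεpos) hr₁.1),
        Metric.mem_ball_self (lt_trans (half_pos hεpos) hr₂.1)⟩, ?_⟩
    refine Set.prod_mono ?_ ?_ |>.trans huv
    · exact (Metric.ball_subset_ball (le_trans hr₁.2.le (min_le_left _ _))).trans hball₁
    · exact (Metric.ball_subset_ball (le_trans hr₂.2.le (min_le_right _ _))).trans hball₂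
  choose u v hu hv hnu hnv hmem hsub using key
  obtain ⟨T, hTc, hTU⟩ := TopologicalSpace.isOpen_iUnion_countable
    (fun z : G => (u z) ×ˢ (v z)) (fun z => (hu z).prod (hv z))
  have hTne : T.Nonempty := by
    rcases hGne with ⟨g, hg⟩
    by_contra h
    rw [Set.not_nonempty_iff_eq_empty] at h
    have hmem' : g ∈ ⋃ z : G, (u z) ×ˢ (v z) := Set.mem_iUnion.mpr ⟨⟨g, hg⟩, hmem _⟩
    rw [← hTU, h] at hmem'
    simpa using hmem'
  obtain ⟨f, hf⟩ := Set.Countable.exists_eq_range hTc hTne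
  refine ⟨fun i => u (f i), fun i => v (f i),
    fun i => ⟨hu _, hv _, hnu _, hnv _⟩, ?_, ?_⟩
  · exact Set.iUnion_subset fun i => hsub (f i)
  · intro g hg
    have hg' : g ∈ ⋃ z : G, (u z) ×ˢ (v z) := Set.mem_iUnion.mpr ⟨⟨g, hg⟩, hmem _⟩
    rw [← hTU] at hg'
    rcases Set.mem_iUnion₂.mp hg' with ⟨z, hzT, hzmem⟩
    have : z ∈ Set.range f := hf ▸ hzT
    rcases this with ⟨i, rfl⟩
    exact Set.mem_iUnion.mpr ⟨i, hzmem⟩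

end MmdAux

/-- Squared Maximum Mean Discrepancy between `P` and `Q` with kernel `k`. -/
noncomputable def mmdSq {X : Type*} [MeasurableSpace X]
    (k : X → X → ℝ) (P Q : Measure X) : ℝ :=
  (∫ x, ∫ y, k x y ∂P ∂P) + (∫ x, ∫ y, k x y ∂Q ∂Q) - 2 * ∫ x, ∫ y, k x y ∂P ∂Q

/-- Let `X` be a Polish space and `k` a bounded continuous characteristic kernel on `X × X`.
If Borel probability measures `P_n` converge weakly to `P` (i.e. integrals of every bounded
continuous function converge), then `MMD_k(P_n, P) → 0`. -/
theorem mmd_tendsto_zero_of_weak_convergence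
    {X : Type*} [TopologicalSpace X] [PolishSpace X] [MeasurableSpace X] [BorelSpace X]
    (k : X → X → ℝ) (hsym : ∀ x y, k x y = k y x)
    (hpd : ∀ (N : ℕ) (a : Fin N → ℝ) (x : Fin N → X),
      0 ≤ ∑ i : Fin N, ∑ j : Fin N, a i * a j * k (x i) (x j))
    (hbdd : ∃ M : ℝ, ∀ x y, |k x y| ≤ M)
    (hcont : Continuous fun p : X × X => k p.1 p.2)
    (hchar : ∀ P Q : Measure X, IsProbabilityMeasure P → IsProbabilityMeasure Q →
      mmdSq k P Q = 0 → P = Q)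
    (P : ℕ → Measure X) (hPn : ∀ n, IsProbabilityMeasure (P n))
    (P0 : Measure X) [IsProbabilityMeasure P0]
    (hweak : ∀ f : BoundedContinuousFunction X ℝ,
      Tendsto (fun n => ∫ x, f x ∂(P n)) atTop (nhds (∫ x, f x ∂P0))) :
    Tendsto (fun n => Real.sqrt (mmdSq k (P n) P0)) atTop (nhds 0) := by
  classical
  letI := TopologicalSpace.upgradeIsCompletelyMetrizable X
  obtain ⟨M, hM⟩ := hbdd
  -- bundled probability measures
  haveI := fun n => hPn n
  set Pn' : ℕ → ProbabilityMeasure X := fun n => ⟨P n, hPn n⟩ with hPn'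
  set P0' : ProbabilityMeasure X := ⟨P0, inferInstance⟩ with hP0'
  have hP : Tendsto Pn' atTop (nhds P0') :=
    ProbabilityMeasure.tendsto_iff_forall_integral_tendsto.mpr fun f => hweak f
  -- "good" sets: measurable with P0-null frontier
  set good : Set X → Prop := fun U => MeasurableSet U ∧ P0 (frontier U) = 0 with hgooddef
  have good_meas : ∀ U, good U → MeasurableSet U := fun U h => h.1
  have good_inter : ∀ U V, good U → good V → good (U ∩ V) := by
    intro U V hU hV
    refine ⟨hU.1.inter hV.1, measure_mono_null ?_ (measure_union_null hU.2 hV.2)⟩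
    refine (frontier_inter_subset U V).trans ?_
    exact Set.union_subset_union Set.inter_subset_left Set.inter_subset_right
  have good_tendsto : ∀ U, good U →
      Tendsto (fun n => ((P n) U).toReal) atTop (nhds ((P0 U).toReal)) := by
    intro U hU
    have h' := ProbabilityMeasure.tendsto_measure_of_null_frontier_of_tendsto' hP
      (E := U) (by exact hU.2)
    exact (ENNReal.tendsto_toReal (measure_ne_top _ _)).comp h'
  -- product probability measures
  set QQ : ℕ → ProbabilityMeasure (X × X) := fun n => (Pn' n).prod (Pn' n) with hQQ
  set QQ0 : ProbabilityMeasure (X × X) := P0'.prod P0' with hQQ0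
  have hQQcoe : ∀ n, (QQ n : Measure (X × X)) = (P n).prod (P n) := fun n => rfl
  have hQQ0coe : (QQ0 : Measure (X × X)) = P0.prod P0 := rfl
  -- liminf condition for open sets in the product
  have h_opens : ∀ G : Set (X × X), IsOpen G →
      (P0.prod P0) G ≤ atTop.liminf fun n => ((P n).prod (P n)) G := by
    intro G hG
    obtain ⟨U, V, hgoodUV, hsub, hsup⟩ := MmdAux.exists_rect_cover P0 hG
    set L : ℕ → List (Set X × Set X) := fun N => (List.range N).map fun i => (U i, V i) with hL
    set A : ℕ → Set (X × X) := fun N => MmdAux.rectU (L N) with hAdef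
    have hA_eq : ∀ N, A N = ⋃ i ∈ Finset.range N, (U i) ×ˢ (V i) := by
      intro N
      ext z
      simp only [hAdef, MmdAux.mem_rectU, hL, List.mem_map, List.mem_range, Finset.mem_range,
        Set.mem_iUnion, Set.mem_prod]
      constructor
      · rintro ⟨p, ⟨i, hi, rfl⟩, h⟩; exact ⟨i, hi, h⟩
      · rintro ⟨i, hi, h⟩; exact ⟨(U i, V i), ⟨i, hi, rfl⟩, h⟩
    have hAmono : Monotone A := by
      intro N N' hNN'
      rw [hA_eq, hA_eq]
      exact Set.biUnion_subset_biUnion_left (Finset.range_subset_range.mpr hNN')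
    have hAunion : (⋃ N, A N) = G := by
      apply subset_antisymm
      · refine Set.iUnion_subset fun N => ?_
        rw [hA_eq]
        exact Set.iUnion₂_subset fun i _ => (Set.subset_iUnion _ i).trans hsub
      · intro g hg
        rcases Set.mem_iUnion.mp (hsup hg) with ⟨i, hi⟩
        refine Set.mem_iUnion.mpr ⟨i + 1, ?_⟩
        rw [hA_eq]
        exact Set.mem_biUnion (Finset.self_mem_range_succ i) hi
    have hAN : ∀ N, Tendsto (fun n => (((P n).prod (P n)) (A N)).toReal) atTop
        (nhds (((P0.prod P0) (A N)).toReal)) := by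
      intro N
      refine MmdAux.tendsto_rectU P P0 good good_meas good_inter good_tendsto (L N).length (L N)
        le_rfl ?_
      intro p hp
      rcases List.mem_map.mp hp with ⟨i, _, rfl⟩
      exact ⟨⟨(hgoodUV i).1.measurableSet, (hgoodUV i).2.2.1⟩,
        ⟨(hgoodUV i).2.1.measurableSet, (hgoodUV i).2.2.2⟩⟩
    have hAN' : ∀ N, Tendsto (fun n => ((P n).prod (P n)) (A N)) atTop
        (nhds ((P0.prod P0) (A N))) := by
      intro N
      exact (ENNReal.tendsto_toReal_iff (fun n => measure_ne_top _ _)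
        (measure_ne_top _ _)).mp (hAN N)
    have hle : ∀ N, (P0.prod P0) (A N) ≤ atTop.liminf fun n => ((P n).prod (P n)) G := by
      intro N
      have hAG : A N ⊆ G := by
        rw [hA_eq]
        exact Set.iUnion₂_subset fun i _ =>
          (Set.subset_iUnion (fun j => (U j) ×ˢ (V j)) i).trans hsub
      rw [← (hAN' N).liminf_eq]
      exact Filter.liminf_le_liminf (Filter.Eventually.of_forall fun n => measure_mono hAG)
    have htend : Tendsto (fun N => (P0.prod P0) (A N)) atTop (nhds ((P0.prod P0) G)) := by
      have := tendsto_measure_iUnion_atTop (μ := P0.prod P0) hAmono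
      rwa [hAunion] at this
    exact le_of_tendsto htend (Filter.Eventually.of_forall hle)
  -- weak convergence of the product measures
  have h_opens' : ∀ G : Set (X × X), IsOpen G →
      QQ0 G ≤ atTop.liminf fun n => QQ n G := by
    intro G hG
    have aux : (↑(atTop.liminf fun n => QQ n G) : ENNReal)
        = atTop.liminf fun n => ((QQ n G : NNReal) : ENNReal) := by
      refine Monotone.map_liminf_of_continuousAt (F := atTop) ENNReal.coe_mono
        (fun n => QQ n G) ENNReal.continuous_coe.continuousAt ?_ ?_
      · exact Filter.IsBoundedUnder.isCoboundedUnder_ge ⟨1, by simp⟩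
      · exact ⟨0, by simp⟩
    apply ENNReal.coe_le_coe.mp
    rw [aux]
    simp_rw [ProbabilityMeasure.ennreal_coeFn_eq_coeFn_toMeasure]
    simp only [hQQcoe, hQQ0coe]
    exact h_opens G hG
  have hQtendsto : Tendsto QQ atTop (nhds QQ0) :=
    MeasureTheory.tendsto_of_forall_isOpen_le_liminf h_opens'
  -- the kernel as a bounded continuous function on the product
  set kb : BoundedContinuousFunction (X × X) ℝ :=
    BoundedContinuousFunction.ofNormedAddCommGroup (fun p => k p.1 p.2) hcont M
      (fun p => by rw [Real.norm_eq_abs]; exact hM p.1 p.2) with hkb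
  have hkbapp : ∀ p : X × X, kb p = k p.1 p.2 := fun p => rfl
  -- integrability of k on products
  have hint : ∀ (μ ν : Measure X) [IsProbabilityMeasure μ] [IsProbabilityMeasure ν],
      Integrable (Function.uncurry k) (μ.prod ν) := by
    intro μ ν hμ hν
    have := kb.integrable (μ.prod ν)
    exact this
  -- convergence of the double integral over P n ⊗ P n
  have ha : Tendsto (fun n => ∫ x, ∫ y, k x y ∂(P n) ∂(P n)) atTop
      (nhds (∫ x, ∫ y, k x y ∂P0 ∂P0)) := by
    have h1 := ProbabilityMeasure.tendsto_iff_forall_integral_tendsto.mp hQtendsto kb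
    simp only [hQQcoe, hQQ0coe, hkbapp] at h1
    have e1 : ∀ n, ∫ x, ∫ y, k x y ∂(P n) ∂(P n)
        = ∫ p, k p.1 p.2 ∂((P n).prod (P n)) := fun n => integral_integral (hint _ _)
    have e2 : ∫ x, ∫ y, k x y ∂P0 ∂P0 = ∫ p, k p.1 p.2 ∂(P0.prod P0) :=
      integral_integral (hint _ _)
    rw [e2]
    exact h1.congr fun n => (e1 n).symm
  -- F y = ∫ x, k x y ∂P0 as a bounded continuous function
  have hcontF : Continuous fun y => ∫ x, k x y ∂P0 := by
    refine continuous_of_dominated (bound := fun _ => M) ?_ ?_ (integrable_const M) ?_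
    · intro y
      exact ((hcont.comp (continuous_id.prodMk continuous_const)).aestronglyMeasurable)
    · intro y
      exact Filter.Eventually.of_forall fun x => by rw [Real.norm_eq_abs]; exact hM x y
    · exact Filter.Eventually.of_forall fun x =>
        hcont.comp (continuous_const.prodMk continuous_id)
  set F : BoundedContinuousFunction X ℝ :=
    BoundedContinuousFunction.ofNormedAddCommGroup (fun y => ∫ x, k x y ∂P0) hcontF M
      (fun y => by
        have h1 : ‖∫ x, k x y ∂P0‖ ≤ M * (P0 Set.univ).toReal :=
          norm_integral_le_of_norm_le_const (Filter.Eventually.of_forall fun x => by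
            rw [Real.norm_eq_abs]; exact hM x y)
        simpa using h1) with hF
  have hFapp : ∀ y, F y = ∫ x, k x y ∂P0 := fun y => rfl
  -- convergence of the mixed term
  have hswap : ∀ (ν : Measure X) [IsProbabilityMeasure ν],
      ∫ x, ∫ y, k x y ∂ν ∂P0 = ∫ y, F y ∂ν := by
    intro ν hν
    rw [integral_integral_swap (hint P0 ν)]
    rfl
  have hb : Tendsto (fun n => ∫ x, ∫ y, k x y ∂(P n) ∂P0) atTop
      (nhds (∫ x, ∫ y, k x y ∂P0 ∂P0)) := by
    have h2 := hweak F
    have e3 : ∫ x, ∫ y, k x y ∂P0 ∂P0 = ∫ y, F y ∂P0 := hswap P0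
    rw [e3]
    exact (h2.congr fun n => (hswap (P n)).symm)
  -- put everything together
  have hmmd : Tendsto (fun n => mmdSq k (P n) P0) atTop (nhds 0) := by
    have : Tendsto (fun n => (∫ x, ∫ y, k x y ∂(P n) ∂(P n))
        + (∫ x, ∫ y, k x y ∂P0 ∂P0) - 2 * ∫ x, ∫ y, k x y ∂(P n) ∂P0) atTop
        (nhds ((∫ x, ∫ y, k x y ∂P0 ∂P0) + (∫ x, ∫ y, k x y ∂P0 ∂P0)
          - 2 * ∫ x, ∫ y, k x y ∂P0 ∂P0)) :=
      (ha.add tendsto_const_nhds).sub (tendsto_const_nhds.mul hb)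
    have h0 : (∫ x, ∫ y, k x y ∂P0 ∂P0) + (∫ x, ∫ y, k x y ∂P0 ∂P0)
        - 2 * ∫ x, ∫ y, k x y ∂P0 ∂P0 = 0 := by ring
    rw [h0] at this
    exact this.congr fun n => rfl
  have := (Real.continuous_sqrt.tendsto 0).comp hmmd
  simpa [Real.sqrt_zero, Function.comp_def] using this
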